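/- Let S ⊆ ℕ^n be a submonoid and let g₁,…,g_n ∈ S be linearly independent over ℝ with cone(S) = cone{g₁,…,g_n} (S is simplicial). The following are equivalent: (a) for all α, β ∈ S and all i ≠ j in {1,…,n}, if α + g_i = β + g_j then there exists s ∈ S with s = α − g_j = β − g_i (as elements of ℤ^n); (b) for all a ∈ (cone{g₁,…,g_n} ∩ ℕ^n) \ S and all i ≠ j in {1,…,n}, not both a + g_i ∈ S and a + g_j ∈ S. -/

import Mathlib

/-- The cone of nonnegative real linear combinations of elements of `A`. -/
def coneOf {V : Type*} [AddCommMonoid V] [Module ℝ V] (A : Set V) : Set V :=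
  {x | ∃ (s : Finset V) (c : V → ℝ),
    (∀ v ∈ s, 0 ≤ c v ∧ v ∈ A) ∧ x = ∑ v ∈ s, c v • v}

/-- Coordinatewise embedding `ℕ^n → ℝ^n`. -/
def toR {n : ℕ} (a : Fin n → ℕ) : Fin n → ℝ := fun i => a i

lemma toR_add {n : ℕ} (a b : Fin n → ℕ) : toR (a + b) = toR a + toR b := by
  funext t; simp [toR]

lemma mem_coneOf_range {n : ℕ} (g : Fin n → Fin n → ℕ)
    (hinj : Function.Injective (fun i => toR (g i))) (x : Fin n → ℝ) :
    x ∈ coneOf (toR '' Set.range g) ↔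
      ∃ c : Fin n → ℝ, (∀ i, 0 ≤ c i) ∧ x = ∑ i, c i • toR (g i) := by
  set f : Fin n → (Fin n → ℝ) := fun i => toR (g i) with hf
  constructor
  · rintro ⟨s, c, hs, hx⟩
    refine ⟨fun i => if f i ∈ s then c (f i) else 0, ?_, ?_⟩
    · intro i
      by_cases h : f i ∈ s
      · simpa [h] using (hs _ h).1
      · simp [h]
    · have hsub : s = (Finset.univ.filter (fun i => f i ∈ s)).image f := by
        ext v
        simp only [Finset.mem_image, Finset.mem_filter, Finset.mem_univ, true_and]
        constructor
        · intro hv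
          obtain ⟨a, ⟨i, rfl⟩, rfl⟩ := (hs v hv).2
          exact ⟨i, hv, rfl⟩
        · rintro ⟨i, hi, rfl⟩; exact hi
      rw [hx]
      conv_lhs => rw [hsub]
      rw [Finset.sum_image (fun a _ b _ h => hinj h)]
      simp only [ite_smul, zero_smul]
      rw [← Finset.sum_filter]
  · rintro ⟨c, hc, hx⟩
    classical
    refine ⟨Finset.univ.image f,
      fun v => if h : ∃ i, f i = v then c h.choose else 0, ?_, ?_⟩
    · intro v hv
      simp only [Finset.mem_image, Finset.mem_univ, true_and] at hv
      obtain ⟨i, rfl⟩ := hv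
      constructor
      · by_cases h : ∃ k, f k = f i
        · simp only [dif_pos h]; exact hc _
        · simp [h]
      · exact ⟨g i, ⟨i, rfl⟩, rfl⟩
    · rw [Finset.sum_image (fun a _ b _ h => hinj h), hx]
      apply Finset.sum_congr rfl
      intro i _
      have h : ∃ k, f k = f i := ⟨i, rfl⟩
      have : h.choose = i := hinj h.choose_spec
      simp only [dif_pos h, this]
      rfl

/-- Combinatorial Cohen–Macaulay criterion (Theorem 3.1, (2) ⇔ (3)) for a simplicial
submonoid `S ⊆ ℕ^n` with extremal generators `g₁, …, g_n`. -/
theorem stmt4 {n : ℕ} (S : Set (Fin n → ℕ))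
    (h0 : (0 : Fin n → ℕ) ∈ S) (hadd : ∀ a ∈ S, ∀ b ∈ S, a + b ∈ S)
    (g : Fin n → Fin n → ℕ) (hg : ∀ i, g i ∈ S)
    (hind : LinearIndependent ℝ (fun i => toR (g i)))
    (hcone : coneOf (toR '' S) = coneOf (toR '' Set.range g)) :
    (∀ α ∈ S, ∀ β ∈ S, ∀ i j : Fin n, i ≠ j → α + g i = β + g j →
        ∃ s ∈ S, s + g j = α ∧ s + g i = β) ↔
    (∀ a : Fin n → ℕ, toR a ∈ coneOf (toR '' Set.range g) → a ∉ S →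
        ∀ i j : Fin n, i ≠ j → ¬(a + g i ∈ S ∧ a + g j ∈ S)) := by
  have hinj : Function.Injective (fun i => toR (g i)) := hind.injective
  set f : Fin n → (Fin n → ℝ) := fun i => toR (g i) with hf
  have huniq : ∀ c d : Fin n → ℝ, ∑ i, c i • f i = ∑ i, d i • f i → c = d := by
    intro c d h
    have := Fintype.linearIndependent_iff.mp hind (c - d) ?_
    · funext i; have := this i; simp [Pi.sub_apply, sub_eq_zero] at this; exact this
    · simp only [Pi.sub_apply, sub_smul, Finset.sum_sub_distrib, h, sub_self]
  have hmemS : ∀ a ∈ S, toR a ∈ coneOf (toR '' Set.range g) := by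
    intro a ha
    rw [← hcone]
    exact ⟨{toR a}, fun _ => 1, by simp; exact ⟨a, ha, rfl⟩, by simp⟩
  constructor
  · -- (a) → (b)
    intro h a hcone' haS i j hij ⟨hai, haj⟩
    obtain ⟨s, hsS, hs1, hs2⟩ := h (a + g j) haj (a + g i) hai i j hij
      (by rw [add_assoc, add_assoc, add_comm (g j)])
    apply haS
    have : s = a := by
      have := hs1
      funext t
      have := congrFun hs1 t
      simpa using Nat.add_right_cancel this
    rwa [← this]
  · -- (b) → (a)
    intro h α hα β hβ i j hij heq
    obtain ⟨c, hc, hcx⟩ := (mem_coneOf_range g hinj _).mp (hmemS α hα)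
    obtain ⟨d, hd, hdx⟩ := (mem_coneOf_range g hinj _).mp (hmemS β hβ)
    -- coordinates of α + g i = β + g j
    have hR : toR α + f i = toR β + f j := by
      rw [← toR_add, ← toR_add, heq]
    have hco : (fun k => c k + if k = i then 1 else 0)
        = (fun k => d k + if k = j then 1 else 0) := by
      apply huniq
      simp only [add_smul, Finset.sum_add_distrib, ite_smul, one_smul, zero_smul,
        Finset.sum_ite_eq', Finset.mem_univ, if_true, ← hcx, ← hdx]
      rw [hcx, hdx] at hR; exact hR
    have hcj : c j = d j + 1 := by
      have := congrFun hco j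
      simpa [hij.symm] using this
    -- α ≥ g j componentwise
    have hge : ∀ t, g j t ≤ α t := by
      intro t
      have key : (α t : ℝ) - g j t = ∑ k, (c k - if k = j then 1 else 0) * g k t := by
        have h1 : (α t : ℝ) = ∑ k, c k * g k t := by
          have := congrFun hcx t
          simpa [toR, Finset.sum_apply] using this
        rw [h1]
        simp only [sub_mul, Finset.sum_sub_distrib, ite_mul, one_mul, zero_mul,
          Finset.sum_ite_eq', Finset.mem_univ, if_true]
      have hnn : (0:ℝ) ≤ (α t : ℝ) - g j t := by
        rw [key]
        apply Finset.sum_nonneg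
        intro k _
        apply mul_nonneg _ (by positivity)
        by_cases hk : k = j
        · subst hk; simp [hcj]; exact hd _
        · simp [hk, hc k]
      have : (g j t : ℝ) ≤ α t := by linarith
      exact_mod_cast this
    set a : Fin n → ℕ := fun t => α t - g j t with ha
    have haj : a + g j = α := by
      funext t; simp [ha, Nat.sub_add_cancel (hge t)]
    have hai : a + g i = β := by
      have : (a + g i) + g j = β + g j := by
        rw [← heq, ← haj]; funext t; simp; ring
      funext t
      exact Nat.add_right_cancel (congrFun this t)
    have haC : toR a ∈ coneOf (toR '' Set.range g) := by
      rw [mem_coneOf_range g hinj]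
      refine ⟨fun k => c k - if k = j then 1 else 0, ?_, ?_⟩
      · intro k
        by_cases hk : k = j
        · subst hk; simp [hcj]; exact hd _
        · simp [hk, hc k]
      · funext t
        have key : (α t : ℝ) - g j t = ∑ k, (c k - if k = j then 1 else 0) * g k t := by
          have h1 : (α t : ℝ) = ∑ k, c k * g k t := by
            have := congrFun hcx t
            simpa [toR, Finset.sum_apply] using this
          rw [h1]
          simp only [sub_mul, Finset.sum_sub_distrib, ite_mul, one_mul, zero_mul,
            Finset.sum_ite_eq', Finset.mem_univ, if_true]
        have : (toR a) t = (α t : ℝ) - g j t := by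
          simp [toR, ha, Nat.cast_sub (hge t)]
        rw [this, key]
        simp [Finset.sum_apply, toR]
    by_cases haS : a ∈ S
    · exact ⟨a, haS, haj, hai⟩
    · exact absurd ⟨hai ▸ hai ▸ (hai ▸ hβ), haj ▸ hα⟩ (h a haC haS i j hij)
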